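/- Let k be a complete nonarchimedean field, V and W affine varieties over k, and f : V → W a finite morphism. Then the preimage under f of a bounded subset of W(k) is a bounded subset of V(k). -/

import Mathlib

/-- let `f : V → W` be a finite morphism of affine varieties over a complete
nonarchimedean field `k`. Algebraically: `W = Spec A`, `V = Spec B` with `A, B` finite type
`k`-algebras and `B` a finite `A`-module, `k`-points being `k`-algebra homomorphisms to
`k`, and a set of points is bounded iff every regular function is bounded on it. Then the
preimage under `f` of a bounded subset of `W(k)` is a bounded subset of `V(k)`. -/
theorem stmt6 (k : Type*) [NontriviallyNormedField k] [IsUltrametricDist k] [CompleteSpace k]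
    (A B : Type*) [CommRing A] [CommRing B] [Algebra k A] [Algebra k B]
    [Algebra A B] [IsScalarTower k A B]
    [Algebra.FiniteType k A] [Algebra.FiniteType k B]
    [Module.Finite A B]
    (T : Set (A →ₐ[k] k)) (hT : ∀ a : A, ∃ C : ℝ, ∀ y ∈ T, ‖y a‖ ≤ C) :
    ∀ b : B, ∃ C : ℝ, ∀ x : B →ₐ[k] k,
      x.comp (IsScalarTower.toAlgHom k A B) ∈ T → ‖x b‖ ≤ C := by
  intro b
  choose C hC using hT
  obtain ⟨p, hpm, hpb⟩ := (Algebra.IsIntegral.isIntegral (R := A) b)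
  set n := p.natDegree with hn
  refine ⟨((∑ i ∈ Finset.range n, (C (p.coeff i)).toNNReal : NNReal) : ℝ) + 1, ?_⟩
  intro x hx
  set φ : A →+* k := x.toRingHom.comp (algebraMap A B) with hφ
  have hmap : (p.map φ).Monic := hpm.map φ
  have hroot : (p.map φ).IsRoot (x b) := by
    rw [Polynomial.IsRoot.def, Polynomial.eval_map]
    have h2 := Polynomial.hom_eval₂ p (algebraMap A B) (x : B →+* k) b
    rw [hpb, map_zero] at h2
    exact h2.symm
  have hlt := Polynomial.IsRoot.norm_lt_cauchyBound hmap.ne_zero hroot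
  have hcb : (p.map φ).cauchyBound ≤
      (∑ i ∈ Finset.range n, (C (p.coeff i)).toNNReal) + 1 := by
    rw [Polynomial.cauchyBound, hmap.leadingCoeff]
    simp only [nnnorm_one, div_one]
    gcongr
    rw [hpm.natDegree_map φ]
    apply Finset.sup_le
    intro i hi
    refine le_trans ?_ (Finset.single_le_sum (fun j _ => zero_le) hi)
    rw [Polynomial.coeff_map]
    have h1 : ‖φ (p.coeff i)‖ ≤ C (p.coeff i) := hC (p.coeff i) _ hx
    rw [← norm_toNNReal]
    exact Real.toNNReal_mono h1
  have := hlt.trans_le hcb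
  have hfin : ‖x b‖₊ ≤ (∑ i ∈ Finset.range n, (C (p.coeff i)).toNNReal) + 1 := this.le
  calc ‖x b‖ = ((‖x b‖₊ : NNReal) : ℝ) := rfl
    _ ≤ (((∑ i ∈ Finset.range n, (C (p.coeff i)).toNNReal) + 1 : NNReal) : ℝ) :=
        NNReal.coe_le_coe.mpr hfin
    _ = ((∑ i ∈ Finset.range n, (C (p.coeff i)).toNNReal : NNReal) : ℝ) + 1 := by push_cast; ring
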